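/- Let T be a bounded operator on a Banach space and λ ∈ σ(T) \ σₑ(T) (so T - λI is Fredholm but λ ∈ σ(T)). If the quasinilpotent part H₀((T ⊕ T*) - λI) is closed, then λ is an isolated point of σ(T). -/

import Mathlib

open Filter Set
open LinearMap (ker)

variable {X Y : Type*} [NormedAddCommGroup X] [NormedSpace ℂ X]
  [NormedAddCommGroup Y] [NormedSpace ℂ Y]

/-- `T` has the single-valued extension property at `l0`. -/
def HasSVEPAt (T : X →L[ℂ] X) (l0 : ℂ) : Prop :=
  ∀ U : Set ℂ, IsOpen U → l0 ∈ U → ∀ f : ℂ → X, AnalyticOnNhd ℂ f U →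
    (∀ μ ∈ U, (T - μ • (1 : X →L[ℂ] X)) (f μ) = 0) → ∀ μ ∈ U, f μ = 0

/-- Fredholm: finite-dimensional kernel, closed range of finite codimension. -/
def IsFredholmOp (T : X →L[ℂ] X) : Prop :=
  FiniteDimensional ℂ (ker (T : X →ₗ[ℂ] X)) ∧ IsClosed ((LinearMap.range (T : X →ₗ[ℂ] X) : Submodule ℂ X) : Set X) ∧
    FiniteDimensional ℂ (X ⧸ LinearMap.range (T : X →ₗ[ℂ] X))

/-- finite ascent -/
def FiniteAscent (T : X →L[ℂ] X) : Prop := ∃ n : ℕ, ker ((T ^ n : X →L[ℂ] X) : X →ₗ[ℂ] X) = ker ((T ^ (n + 1) : X →L[ℂ] X) : X →ₗ[ℂ] X)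

/-- finite descent -/
def FiniteDescent (T : X →L[ℂ] X) : Prop :=
  ∃ n : ℕ, LinearMap.range ((T ^ n : X →L[ℂ] X) : X →ₗ[ℂ] X) =
    LinearMap.range ((T ^ (n + 1) : X →L[ℂ] X) : X →ₗ[ℂ] X)

/-- essential spectrum -/
def essSpec (T : X →L[ℂ] X) : Set ℂ := {l | ¬ IsFredholmOp (T - l • 1)}

/-- Browder spectrum -/
def browderSpec (T : X →L[ℂ] X) : Set ℂ :=
  {l | ¬ (IsFredholmOp (T - l • 1) ∧ FiniteAscent (T - l • 1) ∧ FiniteDescent (T - l • 1))}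

/-- the Banach-space dual (adjoint) operator -/
noncomputable def dualOp (T : X →L[ℂ] X) :
    StrongDual ℂ X →L[ℂ] StrongDual ℂ X :=
  (ContinuousLinearMap.compSL X X ℂ (RingHom.id ℂ) (RingHom.id ℂ)).flip T

/-- quasinilpotent part -/
def quasinilpotentPart (S : Y →L[ℂ] Y) : Set Y :=
  {x | Tendsto (fun n : ℕ => ‖(S ^ n) x‖ ^ (1 / (n : ℝ))) atTop (nhds 0)}

section Aux

variable {E : Type*} [NormedAddCommGroup E] [NormedSpace ℂ E]

lemma qnp_iff (S : E →L[ℂ] E) (x : E) :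
    x ∈ quasinilpotentPart S ↔ ∀ ε : ℝ, 0 < ε → ∀ᶠ n : ℕ in atTop, ‖(S ^ n) x‖ ≤ ε ^ n := by
  constructor
  · intro h ε hε
    obtain ⟨N, hN⟩ := Metric.tendsto_atTop.mp h ε hε
    filter_upwards [eventually_ge_atTop (max N 1)] with n hn
    have hn1 : 1 ≤ n := le_trans (le_max_right N 1) hn
    have hd := hN n (le_trans (le_max_left N 1) hn)
    rw [Real.dist_eq, sub_zero,
      abs_of_nonneg (Real.rpow_nonneg (norm_nonneg _) _)] at hd
    have hb : (0:ℝ) ≤ ‖(S ^ n) x‖ := norm_nonneg _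
    have h2 := Real.rpow_le_rpow (Real.rpow_nonneg hb _) hd.le
      (by positivity : (0:ℝ) ≤ (n:ℝ))
    rw [← Real.rpow_mul hb,
      one_div, inv_mul_cancel₀ (by exact_mod_cast Nat.one_le_iff_ne_zero.mp hn1 : (n:ℝ) ≠ 0),
      Real.rpow_one, Real.rpow_natCast] at h2
    exact h2
  · intro h
    rw [quasinilpotentPart, Set.mem_setOf_eq, Metric.tendsto_atTop]
    intro ε hε
    obtain ⟨N, hN⟩ := Filter.eventually_atTop.mp (h (ε/2) (half_pos hε))
    refine ⟨max N 1, fun n hn => ?_⟩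
    have hn1 : 1 ≤ n := le_trans (le_max_right N 1) hn
    have hb := hN n (le_trans (le_max_left N 1) hn)
    have hnz : ((n:ℝ)) ≠ 0 := by exact_mod_cast Nat.one_le_iff_ne_zero.mp hn1
    have h1 : ‖(S ^ n) x‖ ^ (1/(n:ℝ)) ≤ ((ε/2) ^ n) ^ (1/(n:ℝ)) :=
      Real.rpow_le_rpow (norm_nonneg _) hb (by positivity)
    have h2 : ((ε/2) ^ n : ℝ) ^ (1/(n:ℝ)) = ε/2 := by
      rw [← Real.rpow_natCast (ε/2) n, ← Real.rpow_mul (by positivity : (0:ℝ) ≤ ε/2),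
        mul_one_div, div_self hnz, Real.rpow_one]
    rw [Real.dist_eq, sub_zero, abs_of_nonneg (Real.rpow_nonneg (norm_nonneg _) _)]
    calc ‖(S ^ n) x‖ ^ (1/(n:ℝ)) ≤ ε/2 := h2 ▸ h1
      _ < ε := half_lt_self hε

def H0sub (S : E →L[ℂ] E) : Submodule ℂ E where
  carrier := quasinilpotentPart S
  zero_mem' := by
    show (0:E) ∈ quasinilpotentPart S
    rw [qnp_iff]
    intro ε hε
    exact Eventually.of_forall fun n => by simp [pow_nonneg hε.le]
  add_mem' := by
    intro x y hx hy
    replace hx := (qnp_iff S x).mp hx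
    replace hy := (qnp_iff S y).mp hy
    show (x + y) ∈ quasinilpotentPart S
    rw [qnp_iff]
    intro ε hε
    filter_upwards [hx (ε/2) (half_pos hε), hy (ε/2) (half_pos hε),
      eventually_ge_atTop 1] with n hxn hyn hn1
    have h2 : (2:ℝ) ≤ 2 ^ n := by
      calc (2:ℝ) = 2^1 := (pow_one 2).symm
        _ ≤ 2^n := pow_le_pow_right₀ one_le_two hn1
    calc ‖(S ^ n) (x + y)‖ ≤ ‖(S ^ n) x‖ + ‖(S ^ n) y‖ := by
          rw [map_add]; exact norm_add_le _ _
      _ ≤ (ε/2)^n + (ε/2)^n := add_le_add hxn hyn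
      _ = 2 * (ε/2)^n := by ring
      _ ≤ 2^n * (ε/2)^n := by nlinarith [pow_pos (half_pos hε) n]
      _ = ε^n := by rw [← mul_pow]; ring_nf
  smul_mem' := by
    intro c x hx
    replace hx := (qnp_iff S x).mp hx
    show (c • x) ∈ quasinilpotentPart S
    rw [qnp_iff]
    intro ε hε
    have h2 : ∀ᶠ n : ℕ in atTop, ‖c‖ ≤ 2 ^ n :=
      (tendsto_pow_atTop_atTop_of_one_lt (by norm_num : (1:ℝ) < 2)).eventually_ge_atTop ‖c‖
    filter_upwards [hx (ε/2) (half_pos hε), h2] with n hxn hcn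
    calc ‖(S ^ n) (c • x)‖ = ‖c‖ * ‖(S ^ n) x‖ := by rw [map_smul, norm_smul]
      _ ≤ 2^n * (ε/2)^n := by
          apply mul_le_mul hcn hxn (norm_nonneg _) (by positivity)
      _ = ε^n := by rw [← mul_pow]; ring_nf

lemma H0sub_coe (S : E →L[ℂ] E) : (H0sub S : Set E) = quasinilpotentPart S := rfl

lemma kerpow_mono (S : E →L[ℂ] E) : Monotone fun n : ℕ => ker ((S ^ n : E →L[ℂ] E) : E →ₗ[ℂ] E) := by
  apply monotone_nat_of_le_succ
  intro n x hx
  have hx' : (S ^ n) x = 0 := hx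
  have : (S ^ (n+1)) x = S ((S ^ n) x) := by rw [pow_succ']; rfl
  simp only [LinearMap.mem_ker] at *
  rw [ContinuousLinearMap.coe_coe, this, hx', map_zero]

lemma kerpow_le_H0 (S : E →L[ℂ] E) (n : ℕ) : ker ((S ^ n : E →L[ℂ] E) : E →ₗ[ℂ] E) ≤ H0sub S := by
  intro x hx
  have hx' : (S ^ n) x = 0 := hx
  show x ∈ quasinilpotentPart S
  rw [qnp_iff]
  intro ε hε
  filter_upwards [eventually_ge_atTop n] with m hm
  have : (S ^ m) x = 0 := by
    rw [← pow_sub_mul_pow S hm]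
    show (S ^ (m - n)) ((S ^ n) x) = 0
    rw [hx', map_zero]
  rw [this, norm_zero]
  positivity

end Aux

section Aux2

open Filter Set Metric

variable {E : Type*} [NormedAddCommGroup E] [NormedSpace ℂ E]
open LinearMap (ker)

set_option synthInstance.maxHeartbeats 1000000 in
set_option maxHeartbeats 1000000 in
lemma qnp_uniform [CompleteSpace E] (S : E →L[ℂ] E) (V : Submodule ℂ E)
    (hVc : IsClosed (V : Set E)) (hq : ∀ x ∈ V, x ∈ quasinilpotentPart S)
    {ε : ℝ} (hε : 0 < ε) :
    ∃ M : ℝ, 0 < M ∧ ∀ x ∈ V, ∀ n : ℕ, ‖(S ^ n) x‖ ≤ M * ε ^ n * ‖x‖ := by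
  haveI : CompleteSpace V := hVc.completeSpace_coe
  set f : ℕ → Set V := fun k => {x : V | ∀ n : ℕ, ‖(S ^ n) (x : E)‖ ≤ (k+1) * ε ^ n} with hf
  have hfc : ∀ k, IsClosed (f k) := by
    intro k
    have : f k = ⋂ n : ℕ, {x : V | ‖(S ^ n) (x:E)‖ ≤ (k+1) * ε ^ n} := by
      ext x; simp [hf, Set.mem_iInter]
    rw [this]
    exact isClosed_iInter fun n => isClosed_le
      (Continuous.norm ((S^n).continuous.comp continuous_subtype_val)) continuous_const
  have hfu : ⋃ k, f k = Set.univ := by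
    apply Set.eq_univ_of_forall
    intro x
    obtain ⟨N, hN⟩ := Filter.eventually_atTop.mp ((qnp_iff S x).mp (hq x x.2) ε hε)
    obtain ⟨B, hB⟩ : ∃ B : ℝ, ∀ n ∈ Finset.range (N+1), ‖(S ^ n) (x : E)‖ / ε ^ n ≤ B :=
      ⟨(Finset.range (N+1)).sup' ⟨0, by simp⟩ (fun n => ‖(S ^ n) (x : E)‖ / ε ^ n),
        fun n hn => Finset.le_sup' (f := fun n => ‖(S ^ n) (x : E)‖ / ε ^ n) hn⟩
    obtain ⟨k, hk⟩ := exists_nat_ge B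
    refine Set.mem_iUnion.mpr ⟨k, fun n => ?_⟩
    have hεn : (0:ℝ) < ε ^ n := pow_pos hε n
    rcases lt_or_ge n (N+1) with h | h
    · have h1 := hB n (Finset.mem_range.mpr h)
      have h2 : ‖(S^n) (x:E)‖ ≤ B * ε^n := by
        rw [div_le_iff₀ hεn] at h1; exact h1
      calc ‖(S^n) (x:E)‖ ≤ B * ε^n := h2
        _ ≤ ((k:ℝ)+1) * ε^n := by nlinarith
    · have := hN n (by omega)
      nlinarith
  obtain ⟨k, hk⟩ := nonempty_interior_of_iUnion_of_closed hfc hfu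
  obtain ⟨x₀, hx₀⟩ := hk
  obtain ⟨r, hr, hball⟩ := Metric.isOpen_iff.mp isOpen_interior x₀ hx₀
  have hball' : Metric.ball x₀ r ⊆ f k := hball.trans interior_subset
  have hx₀k : x₀ ∈ f k := hball' (Metric.mem_ball_self hr)
  have hsmall : ∀ z : V, ‖z‖ < r → ∀ n : ℕ, ‖(S^n) (z:E)‖ ≤ 2*((k:ℝ)+1) * ε^n := by
    intro z hz n
    have hmem : x₀ + z ∈ Metric.ball x₀ r := by
      rw [Metric.mem_ball, dist_eq_norm]
      simpa using hz
    have h1 := hball' hmem n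
    have h2 := hx₀k n
    have : (S^n) (z:E) = (S^n) ((x₀ + z : V) : E) - (S^n) (x₀ : E) := by
      rw [Submodule.coe_add, map_add]; abel
    rw [this]
    calc ‖(S^n) ((x₀ + z : V) : E) - (S^n) (x₀:E)‖
        ≤ ‖(S^n) ((x₀ + z : V) : E)‖ + ‖(S^n) (x₀:E)‖ := norm_sub_le _ _
      _ ≤ ((k:ℝ)+1)*ε^n + ((k:ℝ)+1)*ε^n := add_le_add h1 h2
      _ = 2*((k:ℝ)+1) * ε^n := by ring
  refine ⟨4*((k:ℝ)+1)/r, by positivity, ?_⟩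
  intro x hx n
  rcases eq_or_ne x 0 with rfl | hx0
  · simp [norm_nonneg]
  · have hxn : (0:ℝ) < ‖x‖ := norm_pos_iff.mpr hx0
    set c : ℂ := ((r / (2*‖x‖) : ℝ) : ℂ) with hc
    have hcn : ‖c‖ = r / (2*‖x‖) := by
      rw [hc, Complex.norm_real, Real.norm_eq_abs, abs_of_pos (by positivity)]
    have hzV : c • x ∈ V := V.smul_mem c hx
    have hznorm : ‖(⟨c • x, hzV⟩ : V)‖ < r := by
      show ‖c • x‖ < r
      rw [norm_smul, hcn, div_mul_eq_mul_div, div_lt_iff₀ (by positivity : (0:ℝ) < 2*‖x‖)]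
      nlinarith
    have h1 := hsmall ⟨c • x, hzV⟩ hznorm n
    have h2 : ‖(S^n) (c • x)‖ = (r/(2*‖x‖)) * ‖(S^n) x‖ := by
      rw [map_smul, norm_smul, hcn]
    rw [h2] at h1
    have h1' : r * ‖(S^n) x‖ ≤ 2*((k:ℝ)+1) * ε^n * (2*‖x‖) := by
      rw [div_mul_eq_mul_div, div_le_iff₀ (by positivity : (0:ℝ) < 2*‖x‖)] at h1
      nlinarith
    rw [div_mul_eq_mul_div, div_mul_eq_mul_div, le_div_iff₀ hr]
    nlinarith

set_option maxHeartbeats 1000000 in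
lemma proj_estimate [CompleteSpace E] (B : E →L[ℂ] E)
    (hk : FiniteDimensional ℂ (ker (B : E →ₗ[ℂ] E)))
    (hr : IsClosed ((LinearMap.range (B : E →ₗ[ℂ] E) : Submodule ℂ E) : Set E)) :
    ∃ (P : E →L[ℂ] E) (C : ℝ), 0 < C ∧ (∀ x, P x ∈ ker (B : E →ₗ[ℂ] E)) ∧ (∀ x ∈ ker (B : E →ₗ[ℂ] E), P x = x) ∧
      (∀ x : E, P x = 0 → ‖x‖ ≤ C * ‖B x‖) ∧ FiniteDimensional ℂ (LinearMap.range (P : E →ₗ[ℂ] E)) := by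
  haveI := hk
  obtain ⟨π, hπ⟩ := Submodule.ClosedComplemented.of_finiteDimensional (ker (B : E →ₗ[ℂ] E))
  set P : E →L[ℂ] E := (ker (B : E →ₗ[ℂ] E)).subtypeL.comp π with hP
  have hPk : ∀ x : E, P x ∈ ker (B : E →ₗ[ℂ] E) := fun x => (π x).2
  have hPid : ∀ x ∈ ker (B : E →ₗ[ℂ] E), P x = x := by
    intro x hx
    show ((π x : ker (B : E →ₗ[ℂ] E)) : E) = x
    rw [show π x = π ((⟨x, hx⟩ : ker (B : E →ₗ[ℂ] E)) : E) from rfl, hπ ⟨x, hx⟩]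
  -- W = ker (P : E →ₗ[ℂ] E)
  have hWc : IsClosed ((ker (P : E →ₗ[ℂ] E) : Submodule ℂ E) : Set E) := by
    have : (ker (P : E →ₗ[ℂ] E) : Set E) = P ⁻¹' {0} := rfl
    rw [this]; exact isClosed_singleton.preimage P.continuous
  haveI : CompleteSpace (ker (P : E →ₗ[ℂ] E)) := hWc.completeSpace_coe
  haveI : CompleteSpace (LinearMap.range (B : E →ₗ[ℂ] E)) := hr.completeSpace_coe
  set g : (ker (P : E →ₗ[ℂ] E)) →L[ℂ] (LinearMap.range (B : E →ₗ[ℂ] E)) :=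
    ContinuousLinearMap.codRestrict (B.comp (ker (P : E →ₗ[ℂ] E)).subtypeL) (LinearMap.range (B : E →ₗ[ℂ] E))
      (fun w => LinearMap.mem_range_self _ _) with hg
  have hginj : ker (g : (ker (P : E →ₗ[ℂ] E)) →ₗ[ℂ] (LinearMap.range (B : E →ₗ[ℂ] E))) = ⊥ := by
    rw [Submodule.eq_bot_iff]
    rintro ⟨w, hw⟩ hgw
    have h1 : B w = 0 := by
      have := congrArg (Subtype.val) (show g ⟨w, hw⟩ = 0 from hgw)
      exact this
    have h2 : P w = w := hPid w h1
    have h3 : P w = 0 := hw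
    refine Subtype.ext ?_
    show w = (0 : E)
    rw [← h2, h3]
  have hgsurj : LinearMap.range (g : (ker (P : E →ₗ[ℂ] E)) →ₗ[ℂ] (LinearMap.range (B : E →ₗ[ℂ] E))) = ⊤ := by
    rw [LinearMap.range_eq_top]
    rintro ⟨y, hy⟩
    obtain ⟨x, rfl⟩ := hy
    have hw : x - P x ∈ ker (P : E →ₗ[ℂ] E) := by
      have : P (x - P x) = P x - P (P x) := by rw [map_sub]
      have h2 : P (P x) = P x := hPid _ (hPk x)
      show P (x - P x) = 0
      rw [this, h2, sub_self]
    refine ⟨⟨x - P x, hw⟩, ?_⟩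
    ext
    show B (x - P x) = B x
    rw [map_sub, (show B (P x) = 0 from hPk x), sub_zero]
  set e := ContinuousLinearEquiv.ofBijective g hginj hgsurj with he
  set C₀ : ℝ := ‖(e.symm : (LinearMap.range (B : E →ₗ[ℂ] E)) →L[ℂ] (ker (P : E →ₗ[ℂ] E)))‖ with hC₀
  refine ⟨P, C₀ + 1, by positivity, hPk, hPid, ?_, ?_⟩
  · intro x hx
    set w : ker (P : E →ₗ[ℂ] E) := ⟨x, hx⟩ with hw
    have h1 : e w = g w := rfl
    have h3 := (e.symm : (LinearMap.range (B : E →ₗ[ℂ] E)) →L[ℂ] (ker (P : E →ₗ[ℂ] E))).le_opNorm (g w)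
    have h4 : e.symm (g w) = w := by
      rw [← h1]; exact e.symm_apply_apply w
    rw [ContinuousLinearEquiv.coe_coe, h4, ← hC₀] at h3
    have h5 : ‖w‖ = ‖x‖ := rfl
    have h6 : ‖g w‖ = ‖B x‖ := rfl
    rw [h5, h6] at h3
    nlinarith [norm_nonneg (B x)]
  · have hle : LinearMap.range (P : E →ₗ[ℂ] E) ≤ ker (B : E →ₗ[ℂ] E) := by
      rintro y ⟨x, rfl⟩; exact hPk x
    exact Submodule.finiteDimensional_of_le hle

end Aux2

section Aux3

open Filter Set Metric
variable {E : Type*} [NormedAddCommGroup E] [NormedSpace ℂ E]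
open LinearMap (ker)

lemma usf_estimate [CompleteSpace E] (B : E →L[ℂ] E)
    (hk : FiniteDimensional ℂ (ker (B : E →ₗ[ℂ] E)))
    (hr : IsClosed ((LinearMap.range (B : E →ₗ[ℂ] E) : Submodule ℂ E) : Set E)) :
    ∃ (P : E →L[ℂ] E) (C : ℝ), FiniteDimensional ℂ (LinearMap.range (P : E →ₗ[ℂ] E)) ∧ 0 < C ∧
      ∀ x : E, ‖x‖ ≤ ‖P x‖ + C * ‖B x‖ := by
  obtain ⟨P, C, hC, hPk, hPid, hest, hfd⟩ := proj_estimate B hk hr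
  refine ⟨P, C, hfd, hC, fun x => ?_⟩
  have hw : P (x - P x) = 0 := by
    rw [map_sub, hPid _ (hPk x), sub_self]
  have h1 := hest _ hw
  have h2 : B (x - P x) = B x := by
    rw [map_sub, (show B (P x) = 0 from hPk x), sub_zero]
  rw [h2] at h1
  calc ‖x‖ = ‖P x + (x - P x)‖ := by congr 1; abel
    _ ≤ ‖P x‖ + ‖x - P x‖ := norm_add_le _ _
    _ ≤ ‖P x‖ + C * ‖B x‖ := by linarith

lemma findim_of_estimate [CompleteSpace E] (B : E →L[ℂ] E) (V : Submodule ℂ E)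
    (hVc : IsClosed (V : Set E)) (hq : ∀ x ∈ V, x ∈ quasinilpotentPart B)
    (P : E →L[ℂ] E) (C : ℝ) (hPfd : FiniteDimensional ℂ (LinearMap.range (P : E →ₗ[ℂ] E))) (hC : 0 < C)
    (hest : ∀ x, ‖x‖ ≤ ‖P x‖ + C * ‖B x‖) : FiniteDimensional ℂ V := by
  have hε : (0:ℝ) < (2*C)⁻¹ := by positivity
  obtain ⟨M, hM, hMb⟩ := qnp_uniform B V hVc hq hε
  have key : ∀ n : ℕ, ∀ x : E,
      ‖x‖ ≤ (∑ j ∈ Finset.range n, C^j * ‖P ((B^j) x)‖) + C^n * ‖(B^n) x‖ := by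
    intro n
    induction n with
    | zero => intro x; simp
    | succ n ih =>
      intro x
      have hBx : (B^(n+1)) x = B ((B^n) x) := by
        rw [pow_succ']; rfl
      have h1 : C^n * ‖(B^n) x‖ ≤ C^n * (‖P ((B^n) x)‖ + C * ‖B ((B^n) x)‖) :=
        mul_le_mul_of_nonneg_left (hest ((B^n) x)) (pow_nonneg hC.le n)
      calc ‖x‖ ≤ (∑ j ∈ Finset.range n, C^j * ‖P ((B^j) x)‖) + C^n * ‖(B^n) x‖ := ih x
        _ ≤ (∑ j ∈ Finset.range n, C^j * ‖P ((B^j) x)‖)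
            + (C^n * ‖P ((B^n) x)‖ + C^(n+1) * ‖B ((B^n) x)‖) := by
              rw [pow_succ]; nlinarith
        _ = (∑ j ∈ Finset.range (n+1), C^j * ‖P ((B^j) x)‖) + C^(n+1) * ‖(B^(n+1)) x‖ := by
              rw [Finset.sum_range_succ, hBx]; ring
  have hCC : C * (2*C)⁻¹ = 1/2 := by field_simp
  obtain ⟨N, hN⟩ := exists_pow_lt_of_lt_one (show (0:ℝ) < 1/(2*M) by positivity)
    (show (1:ℝ)/2 < 1 by norm_num)
  have hzero : ∀ x : E, x ∈ V → (∀ j, j < N → P ((B^j) x) = 0) → x = 0 := by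
    intro x hx hj
    have h1 := key N x
    have h2 : (∑ j ∈ Finset.range N, C^j * ‖P ((B^j) x)‖) = 0 :=
      Finset.sum_eq_zero fun j hjm => by
        rw [hj j (Finset.mem_range.mp hjm), norm_zero, mul_zero]
    have h3 : C^N * ‖(B^N) x‖ ≤ C^N * (M * ((2*C)⁻¹)^N * ‖x‖) :=
      mul_le_mul_of_nonneg_left (hMb x hx N) (pow_nonneg hC.le N)
    have h4 : C^N * (M * ((2*C)⁻¹)^N * ‖x‖) = M * (1/2:ℝ)^N * ‖x‖ := by
      rw [show C^N * (M * ((2*C)⁻¹)^N * ‖x‖) = M * ((C * (2*C)⁻¹)^N) * ‖x‖ by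
        rw [mul_pow]; ring, hCC]
    have h5 : ‖x‖ ≤ M * (1/2:ℝ)^N * ‖x‖ := by
      rw [h2, zero_add] at h1
      calc ‖x‖ ≤ C^N * ‖(B^N) x‖ := h1
        _ ≤ M * (1/2:ℝ)^N * ‖x‖ := by rw [← h4]; exact h3
    have h6 : M * (1/2:ℝ)^N < 1/2 := by
      have := (mul_lt_mul_iff_right₀ hM).mpr hN
      calc M * (1/2:ℝ)^N < M * (1/(2*M)) := this
        _ = 1/2 := by field_simp
    have h7 : ‖x‖ ≤ 0 := by nlinarith [norm_nonneg x]
    exact norm_le_zero_iff.mp h7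
  let Ψ : V →ₗ[ℂ] (Fin N → (LinearMap.range (P : E →ₗ[ℂ] E))) :=
    { toFun := fun x => fun j => ⟨P ((B^(j:ℕ)) (x:E)), LinearMap.mem_range_self _ _⟩
      map_add' := by intro x y; funext j; apply Subtype.ext; simp
      map_smul' := by intro c x; funext j; apply Subtype.ext; simp }
  have hinj : Function.Injective Ψ := by
    rw [← LinearMap.ker_eq_bot, Submodule.eq_bot_iff]
    intro x hx
    have h0 : ∀ j : ℕ, j < N → P ((B^j) (x:E)) = 0 := by
      intro j hj
      have := congrFun (show Ψ x = 0 from hx) ⟨j, hj⟩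
      exact congrArg Subtype.val this
    apply Subtype.ext
    exact hzero (x:E) x.2 h0
  exact FiniteDimensional.of_injective Ψ hinj

lemma isClosed_sup_fin [CompleteSpace E] (V F : Submodule ℂ E) (hV : IsClosed (V : Set E))
    [FiniteDimensional ℂ F] : IsClosed ((V ⊔ F : Submodule ℂ E) : Set E) := by
  haveI : IsClosed (V : Set E) := hV
  let mkc : E →L[ℂ] (E ⧸ V) := LinearMap.mkContinuous V.mkQ 1
    (fun x => by simpa using Submodule.Quotient.norm_mk_le (S := V) x)
  haveI h1 : FiniteDimensional ℂ (Submodule.map V.mkQ F) := inferInstance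
  have h2 : IsClosed ((Submodule.map V.mkQ F : Submodule ℂ (E ⧸ V)) : Set (E ⧸ V)) :=
    Submodule.closed_of_finiteDimensional _
  have h4 : (Submodule.comap V.mkQ (Submodule.map V.mkQ F)) = V ⊔ F := by
    rw [Submodule.comap_map_eq, Submodule.ker_mkQ, sup_comm]
  have h3 : ((V ⊔ F : Submodule ℂ E) : Set E) = mkc ⁻¹' (Submodule.map V.mkQ F) := by
    ext x
    rw [Set.mem_preimage, SetLike.mem_coe, ← h4]
    exact Iff.rfl
  rw [h3]
  exact h2.preimage mkc.continuous

end Aux3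

section Aux4

open Filter Set Metric
variable {E : Type*} [NormedAddCommGroup E] [NormedSpace ℂ E]
open LinearMap (ker)

lemma image_isClosed [CompleteSpace E] (B : E →L[ℂ] E)
    (hk : FiniteDimensional ℂ (ker (B : E →ₗ[ℂ] E)))
    (hr : IsClosed ((LinearMap.range (B : E →ₗ[ℂ] E) : Submodule ℂ E) : Set E))
    (V : Submodule ℂ E) (hV : IsClosed (V : Set E)) :
    IsClosed (B '' (V : Set E)) := by
  obtain ⟨P, C, hC, hPk, hPid, hest, _⟩ := proj_estimate B hk hr
  haveI : FiniteDimensional ℂ (ker (B : E →ₗ[ℂ] E)) := hk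
  have hVk : IsClosed ((V ⊔ ker (B : E →ₗ[ℂ] E) : Submodule ℂ E) : Set E) := isClosed_sup_fin V (ker (B : E →ₗ[ℂ] E)) hV
  have himg : B '' (V : Set E) = B '' ((V ⊔ ker (B : E →ₗ[ℂ] E) : Submodule ℂ E) : Set E) := by
    apply Set.Subset.antisymm
    · exact Set.image_mono (fun z hz => Submodule.mem_sup_left hz)
    · rintro y ⟨x, hx, rfl⟩
      obtain ⟨v, hv, k, hkk, rfl⟩ := Submodule.mem_sup.mp hx
      refine ⟨v, hv, ?_⟩
      rw [map_add, (show B k = 0 from hkk), add_zero]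
  rw [himg]
  apply IsSeqClosed.isClosed
  intro u y hu huy
  have hpre : ∀ n, ∃ x : E, x ∈ (V ⊔ ker (B : E →ₗ[ℂ] E) : Submodule ℂ E) ∧ P x = 0 ∧ B x = u n := by
    intro n
    obtain ⟨x, hx, hBx⟩ := hu n
    refine ⟨x - P x, Submodule.sub_mem _ hx (Submodule.mem_sup_right (hPk x)), ?_, ?_⟩
    · rw [map_sub, hPid _ (hPk x), sub_self]
    · rw [map_sub, (show B (P x) = 0 from hPk x), sub_zero]; exact hBx
  choose x hxV hxP hxB using hpre
  have hcauchy : CauchySeq x := by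
    have hCu : CauchySeq u := huy.cauchySeq
    rw [Metric.cauchySeq_iff] at hCu ⊢
    intro ε hε
    obtain ⟨N, hN⟩ := hCu (ε / C) (by positivity)
    refine ⟨N, fun m hm n hn => ?_⟩
    have h1 : P (x m - x n) = 0 := by rw [map_sub, hxP, hxP, sub_self]
    have h2 := hest _ h1
    rw [map_sub, hxB, hxB] at h2
    rw [dist_eq_norm]
    calc ‖x m - x n‖ ≤ C * ‖u m - u n‖ := h2
      _ < C * (ε / C) := by
          apply mul_lt_mul_of_pos_left _ hC
          rw [← dist_eq_norm]; exact hN m hm n hn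
      _ = ε := by field_simp
  obtain ⟨z, hz⟩ := cauchySeq_tendsto_of_complete hcauchy
  have hzV : z ∈ (V ⊔ ker (B : E →ₗ[ℂ] E) : Submodule ℂ E) :=
    hVk.mem_of_tendsto hz (Eventually.of_forall fun n => hxV n)
  have hBz : Tendsto (fun n => B (x n)) atTop (nhds (B z)) := (B.continuous.tendsto z).comp hz
  have h5 : (fun n => B (x n)) = u := funext hxB
  rw [h5] at hBz
  exact ⟨z, hzV, tendsto_nhds_unique hBz huy⟩

lemma exists_dual_annihilator [CompleteSpace E] (V : Submodule ℂ E) (hV : IsClosed (V : Set E))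
    {x : E} (hx : x ∉ V) :
    ∃ g : StrongDual ℂ E, (∀ v ∈ V, g v = 0) ∧ g x ≠ 0 := by
  haveI : IsClosed (V : Set E) := hV
  let mkc : E →L[ℂ] (E ⧸ V) := LinearMap.mkContinuous V.mkQ 1
    (fun z => by simpa using Submodule.Quotient.norm_mk_le (S := V) z)
  have hx0 : (Submodule.Quotient.mk x : E ⧸ V) ≠ 0 := by
    simpa [Submodule.Quotient.mk_eq_zero] using hx
  obtain ⟨h, _, h2⟩ := exists_dual_vector ℂ _ (norm_ne_zero_iff.mpr hx0)
  refine ⟨h.comp mkc, fun v hv => ?_, ?_⟩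
  · have : mkc v = 0 := by
      show V.mkQ v = 0
      simpa [Submodule.Quotient.mk_eq_zero] using hv
    show h (mkc v) = 0
    rw [this, map_zero]
  · show h (mkc x) ≠ 0
    have : mkc x = (Submodule.Quotient.mk x : E ⧸ V) := rfl
    rw [this, h2]
    simpa [Complex.ofReal_ne_zero] using norm_ne_zero_iff.mpr hx0

lemma chain_stabilizes {W : Submodule ℂ E} [FiniteDimensional ℂ W] (f : ℕ → Submodule ℂ E)
    (hmono : Monotone f) (hle : ∀ n, f n ≤ W) : ∃ p, ∀ n, p ≤ n → f n = f p := by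
  have hN := (monotone_stabilizes_iff_noetherian (R := ℂ) (M := W)).mpr inferInstance
  let g : ℕ →o Submodule ℂ W :=
    ⟨fun n => (f n).comap W.subtype, fun a b hab => Submodule.comap_mono (hmono hab)⟩
  obtain ⟨p, hp⟩ := hN g
  have h2 : ∀ m, Submodule.map W.subtype ((f m).comap W.subtype) = f m := fun m => by
    rw [Submodule.map_comap_subtype, inf_eq_right.mpr (hle m)]
  refine ⟨p, fun n hn => ?_⟩
  have h3 : g n = g p := (hp n hn).symm
  have h4 : Submodule.comap W.subtype (f n) = Submodule.comap W.subtype (f p) := h3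
  rw [← h2 n, ← h2 p, h4]

lemma dualOp_apply (S : E →L[ℂ] E) (g : StrongDual ℂ E) : dualOp S g = g.comp S := rfl

set_option synthInstance.maxHeartbeats 200000 in
lemma dualOp_pow_apply (S : E →L[ℂ] E) (n : ℕ) (g : StrongDual ℂ E) (x : E) :
    ((dualOp S ^ n) g) x = g ((S ^ n) x) := by
  induction n generalizing g with
  | zero => rfl
  | succ n ih =>
    have h1 : (dualOp S ^ (n+1)) g = (dualOp S ^ n) (dualOp S g) := by
      rw [pow_succ]; rfl
    rw [h1, ih (dualOp S g)]
    show g (S ((S^n) x)) = g ((S^(n+1)) x)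
    rw [← ContinuousLinearMap.mul_apply, ← pow_succ']

set_option maxHeartbeats 1000000 in
lemma dual_estimate [CompleteSpace E] (B : E →L[ℂ] E)
    (hr : IsClosed ((LinearMap.range (B : E →ₗ[ℂ] E) : Submodule ℂ E) : Set E))
    (hcoker : FiniteDimensional ℂ (E ⧸ LinearMap.range (B : E →ₗ[ℂ] E))) :
    ∃ (P : StrongDual ℂ E →L[ℂ] StrongDual ℂ E) (C : ℝ),
      FiniteDimensional ℂ (LinearMap.range (P : StrongDual ℂ E →ₗ[ℂ] StrongDual ℂ E)) ∧ 0 < C ∧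
      ∀ g : StrongDual ℂ E, ‖g‖ ≤ ‖P g‖ + C * ‖dualOp B g‖ := by
  haveI : IsClosed ((LinearMap.range (B : E →ₗ[ℂ] E) : Submodule ℂ E) : Set E) := hr
  haveI := hcoker
  set R : Submodule ℂ E := LinearMap.range (B : E →ₗ[ℂ] E) with hR
  set d := Module.finrank ℂ (E ⧸ R) with hd
  set b : Module.Basis (Fin d) ℂ (E ⧸ R) := Module.finBasis ℂ (E ⧸ R) with hb
  have hsurj : Function.Surjective R.mkQ := Submodule.mkQ_surjective R
  choose u hu using fun i => hsurj (b i)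
  set ρl : (E ⧸ R) →ₗ[ℂ] E := Module.Basis.constr b ℂ u with hρl
  set ρ : (E ⧸ R) →L[ℂ] E := LinearMap.toContinuousLinearMap ρl with hρ
  set mkc : E →L[ℂ] (E ⧸ R) := LinearMap.mkContinuous R.mkQ 1
    (fun z => by simpa using Submodule.Quotient.norm_mk_le (S := R) z) with hmkc
  set P₀ : E →L[ℂ] E := ρ.comp mkc with hP₀
  have hmkρ : ∀ q : E ⧸ R, R.mkQ (ρl q) = q := by
    have h : R.mkQ.comp ρl = LinearMap.id := by
      apply b.ext; intro i
      simp [hρl, Module.Basis.constr_basis, hu]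
    intro q
    exact DFunLike.congr_fun h q
  have hP₀x : ∀ x : E, P₀ x = ρl (R.mkQ x) := fun x => rfl
  have hP₀mem : ∀ x, x - P₀ x ∈ R := by
    intro x
    have h0 : R.mkQ (x - P₀ x) = 0 := by
      rw [map_sub, hP₀x, hmkρ, sub_self]
    have h1 : (Submodule.Quotient.mk (x - P₀ x) : E ⧸ R) = 0 := h0
    exact (Submodule.Quotient.mk_eq_zero R).mp h1
  have hP₀u : ∀ i, P₀ (u i) = u i := by
    intro i
    rw [hP₀x, hu i]
    simp [hρl, Module.Basis.constr_basis]
  set P : StrongDual ℂ E →L[ℂ] StrongDual ℂ E := dualOp P₀ with hPdef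
  have hPfd : FiniteDimensional ℂ (LinearMap.range (P : StrongDual ℂ E →ₗ[ℂ] StrongDual ℂ E)) := by
    set Φ : StrongDual ℂ E →ₗ[ℂ] (Fin d → ℂ) :=
      { toFun := fun h => fun i => h (u i)
        map_add' := by intro a c; funext i; simp
        map_smul' := by intro a c; funext i; simp } with hΦ
    have hinj : ∀ h ∈ LinearMap.range (P : StrongDual ℂ E →ₗ[ℂ] StrongDual ℂ E), Φ h = 0 → h = 0 := by
      rintro h ⟨g, rfl⟩ hΦ0
      ext x
      show (P g) x = 0
      have hgx : (P g) x = g (P₀ x) := rfl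
      rw [hgx, hP₀x, Module.Basis.constr_apply, map_finsuppSum, Finsupp.sum]
      apply Finset.sum_eq_zero
      intro i _
      rw [map_smul]
      have hgu : g (u i) = 0 := by
        have h1 := congrFun hΦ0 i
        have h2 : (P g) (u i) = g (u i) := by
          have : (P g) (u i) = g (P₀ (u i)) := rfl
          rw [this, hP₀u i]
        simpa [hΦ, h2] using h1
      rw [hgu, smul_zero]
    let Ψ : LinearMap.range (P : StrongDual ℂ E →ₗ[ℂ] StrongDual ℂ E) →ₗ[ℂ] (Fin d → ℂ) := Φ.comp (LinearMap.range (P : StrongDual ℂ E →ₗ[ℂ] StrongDual ℂ E)).subtype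
    have hΨ : Function.Injective Ψ := by
      rintro ⟨a, ha⟩ ⟨c, hc⟩ hac
      have hac' : Φ a = Φ c := hac
      have := hinj (a - c) (Submodule.sub_mem _ ha hc) (by rw [map_sub]; exact sub_eq_zero.mpr hac')
      exact Subtype.ext (sub_eq_zero.mp this)
    exact FiniteDimensional.of_injective Ψ hΨ
  haveI : CompleteSpace R := hr.completeSpace_coe
  set Bc : E →L[ℂ] R := B.codRestrict R (fun z => LinearMap.mem_range_self _ _) with hBc
  have hBcsurj : Function.Surjective Bc := by
    rintro ⟨y, hy⟩
    obtain ⟨z, rfl⟩ := hy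
    exact ⟨z, rfl⟩
  obtain ⟨C₀, hC₀pos, hC₀⟩ := Bc.exists_preimage_norm_le hBcsurj
  refine ⟨P, C₀ * (1 + ‖P₀‖), hPfd, by positivity, ?_⟩
  intro g
  apply ContinuousLinearMap.opNorm_le_bound _ (by positivity)
  intro x
  obtain ⟨v, hv, hvn⟩ := hC₀ ⟨x - P₀ x, hP₀mem x⟩
  have hBv : B v = x - P₀ x := congrArg Subtype.val hv
  have h1 : g x = g (B v) + g (P₀ x) := by
    rw [hBv, ← map_add]; congr 1; abel
  have e1 : ‖g (B v)‖ ≤ ‖dualOp B g‖ * ‖v‖ := by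
    rw [show g (B v) = (dualOp B g) v from rfl]
    exact (dualOp B g).le_opNorm v
  have e2 : ‖g (P₀ x)‖ ≤ ‖P g‖ * ‖x‖ := by
    rw [show g (P₀ x) = (P g) x from rfl]
    exact (P g).le_opNorm x
  have e3 : ‖v‖ ≤ C₀ * ‖x - P₀ x‖ := by
    have : ‖(⟨x - P₀ x, hP₀mem x⟩ : R)‖ = ‖x - P₀ x‖ := rfl
    rw [← this]; exact hvn
  have e4 : ‖x - P₀ x‖ ≤ (1 + ‖P₀‖) * ‖x‖ := by
    calc ‖x - P₀ x‖ ≤ ‖x‖ + ‖P₀ x‖ := norm_sub_le _ _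
      _ ≤ ‖x‖ + ‖P₀‖ * ‖x‖ := by
          have := P₀.le_opNorm x; linarith
      _ = (1 + ‖P₀‖) * ‖x‖ := by ring
  have e5 : ‖v‖ ≤ C₀ * ((1 + ‖P₀‖) * ‖x‖) :=
    le_trans e3 (mul_le_mul_of_nonneg_left e4 hC₀pos.le)
  have e6 : ‖dualOp B g‖ * ‖v‖ ≤ ‖dualOp B g‖ * (C₀ * ((1 + ‖P₀‖) * ‖x‖)) :=
    mul_le_mul_of_nonneg_left e5 (norm_nonneg _)
  calc ‖g x‖ = ‖g (B v) + g (P₀ x)‖ := by rw [h1]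
    _ ≤ ‖g (B v)‖ + ‖g (P₀ x)‖ := norm_add_le _ _
    _ ≤ ‖dualOp B g‖ * (C₀ * ((1 + ‖P₀‖) * ‖x‖)) + ‖P g‖ * ‖x‖ := by linarith
    _ = (‖P g‖ + C₀ * (1 + ‖P₀‖) * ‖dualOp B g‖) * ‖x‖ := by ring

end Aux4

section Main
open Filter Set Metric ContinuousLinearMap
open LinearMap (ker)

set_option maxHeartbeats 2000000 in
set_option synthInstance.maxHeartbeats 1000000 in
/-- If `l ∈ σ(T) \ σₑ(T)` and the quasinilpotent part of `(T ⊕ T*) - l` is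
closed, then `l` is an isolated point of `σ(T)`. -/
theorem stmt_17 [CompleteSpace X] (T : X →L[ℂ] X) (l : ℂ)
    (hl : l ∈ spectrum ℂ T) (hle : l ∉ essSpec T)
    (hH : IsClosed (quasinilpotentPart (T.prodMap (dualOp T) - l • 1))) :
    ¬ AccPt l (𝓟 (spectrum ℂ T)) := by
  have hFred : IsFredholmOp (T - l • 1) := not_not.mp hle
  obtain ⟨hk, hrc, hcoker⟩ := hFred
  set A : X →L[ℂ] X := T - l • 1 with hA
  set Xd := StrongDual ℂ X with hXd
  set A' : Xd →L[ℂ] Xd := dualOp T - l • 1 with hA'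
  have hA'eq : A' = dualOp A := by
    have h1 : dualOp (T - l • (1:X→L[ℂ]X)) = dualOp T - l • dualOp (1:X→L[ℂ]X) := by
      unfold dualOp; rw [map_sub, map_smul]
    have h2 : dualOp (1:X→L[ℂ]X) = 1 := by ext g x; rfl
    rw [hA, hA', h1, h2]
  set Sp : (X × Xd) →L[ℂ] (X × Xd) := T.prodMap (dualOp T) - l • 1 with hSp
  have hSp1 : ∀ q : X × Xd, Sp q = (A q.1, A' q.2) := by
    rintro ⟨x, g⟩
    show (T x, (dualOp T) g) - l • ((x, g) : X × Xd) = (A x, A' g)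
    rw [Prod.smul_mk, Prod.mk_sub_mk]
    refine Prod.ext ?_ ?_
    · show T x - l • x = A x
      rw [hA]; simp
    · show (dualOp T) g - l • g = A' g
      rw [hA']; simp
  have hSpow : ∀ n : ℕ, ∀ q : X × Xd, (Sp ^ n) q = ((A ^ n) q.1, (A' ^ n) q.2) := by
    intro n
    induction n with
    | zero => intro q; rfl
    | succ n ih =>
      intro q
      rw [pow_succ', ContinuousLinearMap.mul_apply, ih, hSp1]
      rw [pow_succ' A, pow_succ' A']
      rfl
  have hmemX : ∀ x : X, x ∈ quasinilpotentPart A ↔ (x, (0:Xd)) ∈ quasinilpotentPart Sp := by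
    intro x
    have hfe : (fun n : ℕ => ‖(Sp ^ n) (x, (0:Xd))‖ ^ (1/(n:ℝ)))
        = fun n : ℕ => ‖(A ^ n) x‖ ^ (1/(n:ℝ)) := by
      funext n
      rw [hSpow n]
      simp only [map_zero]
      rw [Prod.norm_def]
      simp [max_eq_left (norm_nonneg _)]
    unfold quasinilpotentPart
    simp only [Set.mem_setOf_eq]
    rw [hfe]
  have hmemXd : ∀ g : Xd, g ∈ quasinilpotentPart A' ↔ ((0:X), g) ∈ quasinilpotentPart Sp := by
    intro g
    have hfe : (fun n : ℕ => ‖(Sp ^ n) ((0:X), g)‖ ^ (1/(n:ℝ)))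
        = fun n : ℕ => ‖(A' ^ n) g‖ ^ (1/(n:ℝ)) := by
      funext n
      rw [hSpow n]
      simp only [map_zero]
      rw [Prod.norm_def]
      simp [max_eq_right, norm_nonneg]
      exact congrArg (· ^ ((n:ℝ)⁻¹)) (max_eq_right (norm_nonneg (E := StrongDual ℂ X) _))
    unfold quasinilpotentPart
    simp only [Set.mem_setOf_eq]
    rw [hfe]
  have hHX : IsClosed ((H0sub A : Set X)) := by
    rw [H0sub_coe]
    have h1 : quasinilpotentPart A = (fun x : X => (x, (0:Xd))) ⁻¹' quasinilpotentPart Sp := by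
      ext x; exact hmemX x
    rw [h1]
    exact hH.preimage (by fun_prop)
  have hHXd : IsClosed ((H0sub A' : Set Xd)) := by
    rw [H0sub_coe]
    have h1 : quasinilpotentPart A' = (fun g : Xd => ((0:X), g)) ⁻¹' quasinilpotentPart Sp := by
      ext g; exact hmemXd g
    rw [h1]
    exact hH.preimage (by fun_prop)
  obtain ⟨P, C, hPfd, hC, hest⟩ := usf_estimate A hk hrc
  have hHfd : FiniteDimensional ℂ (H0sub A) :=
    findim_of_estimate A (H0sub A) hHX (fun x hx => hx) P C hPfd hC hest
  obtain ⟨P', C', hP'fd, hC', hest'⟩ := dual_estimate A hrc hcoker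
  have hKfd : FiniteDimensional ℂ (H0sub A') := by
    refine findim_of_estimate A' (H0sub A') hHXd (fun g hg => hg) P' C' hP'fd hC' ?_
    intro g; rw [hA'eq]; exact hest' g
  -- stabilization of kernel chains
  haveI := hHfd
  haveI := hKfd
  obtain ⟨p, hp⟩ := chain_stabilizes (W := H0sub A) (fun n => ker ((A ^ n : X →L[ℂ] X) : X →ₗ[ℂ] X)) (kerpow_mono A)
    (kerpow_le_H0 A)
  obtain ⟨q0, hq0⟩ := chain_stabilizes (W := H0sub A') (fun n => ker ((A' ^ n : Xd →L[ℂ] Xd) : Xd →ₗ[ℂ] Xd)) (kerpow_mono A')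
    (kerpow_le_H0 A')
  set m : ℕ := max (max p q0) 1 with hm
  have hm1 : 1 ≤ m := le_max_right _ 1
  have hker_m : ∀ n, m ≤ n → ker ((A ^ n : X →L[ℂ] X) : X →ₗ[ℂ] X) = ker ((A ^ m : X →L[ℂ] X) : X →ₗ[ℂ] X) := by
    intro n hn
    have h1 := hp n (le_trans (le_trans (le_max_left p q0) (le_max_left _ 1)) hn)
    have h2 := hp m (le_trans (le_max_left p q0) (le_max_left _ 1))
    rw [h1, h2]
  have hker'_m : ∀ n, m ≤ n → ker ((A' ^ n : Xd →L[ℂ] Xd) : Xd →ₗ[ℂ] Xd) = ker ((A' ^ m : Xd →L[ℂ] Xd) : Xd →ₗ[ℂ] Xd) := by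
    intro n hn
    have h1 := hq0 n (le_trans (le_trans (le_max_right p q0) (le_max_left _ 1)) hn)
    have h2 := hq0 m (le_trans (le_max_right p q0) (le_max_left _ 1))
    rw [h1, h2]
  -- closedness of ranges of powers
  have hranclosed : ∀ n : ℕ, IsClosed ((LinearMap.range ((A ^ n : X →L[ℂ] X) : X →ₗ[ℂ] X) : Submodule ℂ X) : Set X) := by
    intro n
    induction n with
    | zero =>
      have h1 : (LinearMap.range ((A ^ 0 : X →L[ℂ] X) : X →ₗ[ℂ] X) : Submodule ℂ X) = ⊤ := by
        rw [pow_zero]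
        exact LinearMap.range_eq_top.mpr (fun x => ⟨x, rfl⟩)
      rw [h1]
      simpa using isClosed_univ
    | succ n ih =>
      have hcomp : ((LinearMap.range ((A ^ (n+1) : X →L[ℂ] X) : X →ₗ[ℂ] X) : Submodule ℂ X) : Set X)
          = A '' ((LinearMap.range ((A ^ n : X →L[ℂ] X) : X →ₗ[ℂ] X) : Submodule ℂ X) : Set X) := by
        ext y
        simp only [SetLike.mem_coe, LinearMap.mem_range, Set.mem_image, ContinuousLinearMap.coe_coe]
        constructor
        · rintro ⟨x, rfl⟩
          refine ⟨(A^n) x, ⟨x, rfl⟩, ?_⟩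
          rw [← ContinuousLinearMap.mul_apply, ← pow_succ']
        · rintro ⟨z, ⟨x, rfl⟩, rfl⟩
          refine ⟨x, ?_⟩
          rw [← ContinuousLinearMap.mul_apply, ← pow_succ']
      rw [hcomp]
      exact image_isClosed A hk hrc _ ih
  -- range chain stabilization via duality
  have hranstab : ∀ n, m ≤ n → LinearMap.range ((A ^ n : X →L[ℂ] X) : X →ₗ[ℂ] X) = LinearMap.range ((A ^ m : X →L[ℂ] X) : X →ₗ[ℂ] X) := by
    intro n hn
    apply le_antisymm
    · rintro y ⟨x, rfl⟩
      refine ⟨(A^(n-m)) x, ?_⟩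
      simp only [ContinuousLinearMap.coe_coe]; rw [← ContinuousLinearMap.mul_apply, ← pow_add]
      congr 2
      omega
    · rintro y ⟨x, rfl⟩
      by_contra hy
      obtain ⟨g, hg0, hgy⟩ := exists_dual_annihilator (LinearMap.range ((A ^ n : X →L[ℂ] X) : X →ₗ[ℂ] X)) (hranclosed n) hy
      have hgker : g ∈ ker ((A' ^ n : Xd →L[ℂ] Xd) : Xd →ₗ[ℂ] Xd) := by
        show (A'^n) g = 0
        ext z
        rw [hA'eq, dualOp_pow_apply]
        exact hg0 _ ⟨z, rfl⟩
      rw [hker'_m n hn] at hgker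
      have h1 : (A'^m) g = 0 := hgker
      have h2 : g ((A^m) x) = 0 := by
        have h3 := dualOp_pow_apply A m g x
        rw [← hA'eq, h1] at h3
        exact h3.symm
      exact hgy h2
  -- the decomposition
  set NN : Submodule ℂ X := ker ((A ^ m : X →L[ℂ] X) : X →ₗ[ℂ] X) with hNN
  set R : Submodule ℂ X := LinearMap.range ((A ^ m : X →L[ℂ] X) : X →ₗ[ℂ] X) with hRdef
  have hRclosed : IsClosed (R : Set X) := hranclosed m
  haveI : CompleteSpace R := hRclosed.completeSpace_coe
  haveI hNfd : FiniteDimensional ℂ NN := Submodule.finiteDimensional_of_le (kerpow_le_H0 A m)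
  have hpowadd : ∀ x : X, (A^m) ((A^m) x) = (A^(2*m)) x := by
    intro x
    rw [← ContinuousLinearMap.mul_apply, ← pow_add]
    congr 2
    omega
  have hdisj : ∀ x, x ∈ NN → x ∈ R → x = 0 := by
    rintro x hxN ⟨y, rfl⟩
    have h2m : y ∈ ker ((A ^ (2*m) : X →L[ℂ] X) : X →ₗ[ℂ] X) := by
      show (A^(2*m)) y = 0
      rw [← hpowadd]
      exact hxN
    rw [hker_m (2*m) (by omega)] at h2m
    exact h2m
  have hsum : ∀ x : X, ∃ n₁ ∈ NN, ∃ r ∈ R, x = n₁ + r := by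
    intro x
    have h1 : (A^m) x ∈ LinearMap.range ((A ^ (2*m) : X →L[ℂ] X) : X →ₗ[ℂ] X) := by
      rw [hranstab (2*m) (by omega)]
      exact ⟨x, rfl⟩
    obtain ⟨z, hz⟩ := h1
    simp only [ContinuousLinearMap.coe_coe] at hz
    refine ⟨x - (A^m) z, ?_, (A^m) z, ⟨z, rfl⟩, by abel⟩
    show (A^m) (x - (A^m) z) = 0
    rw [map_sub, hpowadd, hz, sub_self]
  have hAR : ∀ x ∈ R, A x ∈ R := by
    rintro x ⟨y, rfl⟩
    refine ⟨A y, ?_⟩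
    have h1 : (A^m) (A y) = (A^(m+1)) y := by rw [pow_succ]; rfl
    have h2 : A ((A^m) y) = (A^(m+1)) y := by rw [pow_succ']; rfl
    simp only [ContinuousLinearMap.coe_coe]
    rw [h1, h2]
  set AR : R →L[ℂ] R := (A.comp R.subtypeL).codRestrict R (fun w => hAR w w.2) with hARdef
  have hARval : ∀ w : R, (AR w : X) = A w := fun w => rfl
  have hARinj : ker (AR : R →ₗ[ℂ] R) = ⊥ := by
    rw [Submodule.eq_bot_iff]
    rintro w hw
    have h1 : A (w:X) = 0 := congrArg Subtype.val (show AR w = 0 from hw)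
    have h2 : (w:X) ∈ NN := by
      show (A^m) (w:X) = 0
      obtain ⟨m', hm'⟩ : ∃ m', m = m' + 1 := ⟨m-1, by omega⟩
      rw [hm', pow_succ, ContinuousLinearMap.mul_apply, h1, map_zero]
    exact Subtype.ext (hdisj _ h2 w.2)
  have hARsurj : LinearMap.range (AR : R →ₗ[ℂ] R) = ⊤ := by
    rw [LinearMap.range_eq_top]
    rintro ⟨y, hy⟩
    have h1 : y ∈ LinearMap.range ((A ^ (m+1) : X →L[ℂ] X) : X →ₗ[ℂ] X) := by
      rw [hranstab (m+1) (by omega)]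
      exact hy
    obtain ⟨x, hx⟩ := h1
    simp only [ContinuousLinearMap.coe_coe] at hx
    refine ⟨⟨(A^m) x, ⟨x, rfl⟩⟩, ?_⟩
    apply Subtype.ext
    show A ((A^m) x) = y
    rw [← ContinuousLinearMap.mul_apply, ← pow_succ', hx]
  set e := ContinuousLinearEquiv.ofBijective AR hARinj hARsurj with he
  set es : R →L[ℂ] R := (e.symm : R →L[ℂ] R) with hes
  set δ : ℝ := (‖es‖ + 1)⁻¹ with hδ
  have hδpos : 0 < δ := by positivity
  have hARe : ∀ w : R, AR w = e w := fun w => rfl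
  have hAes : ∀ z : R, AR (es z) = z := by
    intro z
    rw [show es z = e.symm z from rfl, hARe, e.apply_symm_apply]
  have hnotspec : ∀ z : ℂ, z ≠ l → dist z l < δ → z ∉ spectrum ℂ T := by
    intro z hzl hzd
    set μ : ℂ := z - l with hμ
    have hμ0 : μ ≠ 0 := sub_ne_zero.mpr hzl
    have hμn : ‖μ‖ < δ := by
      rw [hμ, ← dist_eq_norm]
      exact hzd
    have hlt1 : ‖μ‖ * ‖es‖ < 1 := by
      have h2 : ‖μ‖ * (‖es‖+1) < δ * (‖es‖+1) :=
        mul_lt_mul_of_pos_right hμn (by positivity)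
      have h3 : δ * (‖es‖+1) = 1 := by
        rw [hδ]
        field_simp
      nlinarith [norm_nonneg μ, norm_nonneg es]
    have heig : ∀ x : X, A x = μ • x → x ∈ R := by
      intro x hx
      have hpow : ∀ k : ℕ, (A^k) x = μ^k • x := by
        intro k
        induction k with
        | zero => simp
        | succ k ih =>
          rw [pow_succ', ContinuousLinearMap.mul_apply, ih, map_smul, hx, smul_smul,
            ← pow_succ]
      refine ⟨(μ^m)⁻¹ • x, ?_⟩
      rw [map_smul, ContinuousLinearMap.coe_coe, hpow m, smul_smul, inv_mul_cancel₀ (pow_ne_zero m hμ0), one_smul]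
    have hinj : ∀ x : X, (A - μ • 1) x = 0 → x = 0 := by
      intro x hx
      have hAx : A x = μ • x := by
        have h1 : A x - μ • x = 0 := by
          simpa [ContinuousLinearMap.sub_apply, ContinuousLinearMap.smul_apply,
            ContinuousLinearMap.one_apply] using hx
        exact sub_eq_zero.mp h1
      have hxR : x ∈ R := heig x hAx
      set w : R := ⟨x, hxR⟩ with hwdef
      have hARw : AR w = μ • w := by
        apply Subtype.ext
        show A x = μ • x
        exact hAx
      have hw1 : w = μ • es w := by
        have h1 : es (AR w) = w := by
          rw [hARe, show es (e w) = e.symm (e w) from rfl, e.symm_apply_apply]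
        rw [hARw, map_smul] at h1
        exact h1.symm
      have h2 : ‖w‖ ≤ ‖μ‖ * (‖es‖ * ‖w‖) := by
        conv_lhs => rw [hw1]
        rw [norm_smul]
        exact mul_le_mul_of_nonneg_left (es.le_opNorm w) (norm_nonneg μ)
      have hwz : ‖w‖ = 0 := by
        by_contra hne
        have hwpos : 0 < ‖w‖ := lt_of_le_of_ne (norm_nonneg w) (Ne.symm hne)
        nlinarith
      have h3 : w = 0 := norm_eq_zero.mp hwz
      have h4 : x = (0:X) := congrArg Subtype.val h3
      exact h4
    -- surjectivity on NN
    have hAN : ∀ x ∈ NN, A x ∈ NN := by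
      intro x hx
      show (A^m) (A x) = 0
      rw [← ContinuousLinearMap.mul_apply, ← pow_succ,
        show (A^(m+1)) x = A ((A^m) x) from by rw [pow_succ']; rfl,
        (show (A^m) x = 0 from hx), map_zero]
    have hNinvar : ∀ x ∈ NN, (A - μ • (1:X→L[ℂ]X)) x ∈ NN := by
      intro x hx
      have h1 : (A - μ • (1:X→L[ℂ]X)) x = A x - μ • x := by
        simp [ContinuousLinearMap.sub_apply, ContinuousLinearMap.smul_apply,
          ContinuousLinearMap.one_apply]
      rw [h1]
      exact Submodule.sub_mem _ (hAN x hx) (Submodule.smul_mem _ _ hx)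
    set fN : NN →ₗ[ℂ] NN :=
      ((A - μ • (1:X→L[ℂ]X)) : X →ₗ[ℂ] X).restrict hNinvar with hfN
    have hfNinj : Function.Injective fN := by
      rw [← LinearMap.ker_eq_bot, Submodule.eq_bot_iff]
      rintro v hv
      have h1 : (A - μ • (1:X→L[ℂ]X)) (v:X) = 0 := congrArg Subtype.val
        (show fN v = 0 from hv)
      exact Subtype.ext (hinj _ h1)
    have hfNsurj : Function.Surjective fN := (LinearMap.injective_iff_surjective).mp hfNinj
    -- surjectivity on R
    have hu1 : ‖μ • es‖ < 1 :=
      lt_of_le_of_lt (ContinuousLinearMap.opNorm_smul_le μ es) hlt1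
    set uu : (R →L[ℂ] R)ˣ := Units.oneSub (μ • es) hu1 with huu
    have hRinv : ∀ y ∈ R, ∃ x ∈ R, (A - μ • (1:X→L[ℂ]X)) x = y := by
      intro y hy
      set yR : R := ⟨y, hy⟩ with hyR
      set xR : R := (↑uu⁻¹ : R →L[ℂ] R) (es yR) with hxR
      have huux : (↑uu : R →L[ℂ] R) xR = es yR := by
        rw [hxR, ← ContinuousLinearMap.comp_apply, ← ContinuousLinearMap.mul_def,
          uu.mul_inv, ContinuousLinearMap.one_apply]
      have hval : (↑uu : R →L[ℂ] R) xR = xR - μ • es xR := by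
        rw [huu, Units.val_oneSub]
        simp [ContinuousLinearMap.sub_apply, ContinuousLinearMap.smul_apply,
          ContinuousLinearMap.one_apply]
      have hkey : xR - μ • es xR = es yR := by rw [← hval, huux]
      have hkey2 : AR xR - μ • AR (es xR) = AR (es yR) := by
        rw [← map_smul, ← map_sub, hkey]
      rw [hAes, hAes] at hkey2
      refine ⟨(xR : X), xR.2, ?_⟩
      have h1 : (A - μ • (1:X→L[ℂ]X)) (xR:X) = A (xR:X) - μ • (xR:X) := by
        simp [ContinuousLinearMap.sub_apply, ContinuousLinearMap.smul_apply,
          ContinuousLinearMap.one_apply]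
      rw [h1]
      have h2 := congrArg Subtype.val hkey2
      simpa [hARval] using h2
    -- assemble surjectivity
    have hsurjA : Function.Surjective (A - μ • (1:X→L[ℂ]X)) := by
      intro y
      obtain ⟨n₁, hn₁, r, hr, rfl⟩ := hsum y
      obtain ⟨vn, hvn⟩ := hfNsurj ⟨n₁, hn₁⟩
      obtain ⟨xr, _, hxr⟩ := hRinv r hr
      refine ⟨(vn : X) + xr, ?_⟩
      rw [map_add, hxr]
      have h1 : (A - μ • (1:X→L[ℂ]X)) (vn : X) = n₁ := congrArg Subtype.val hvn
      rw [h1]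
    have hbij : Function.Bijective (A - μ • (1:X→L[ℂ]X)) := by
      constructor
      · intro a b hab
        have h1 : (A - μ • (1:X→L[ℂ]X)) (a - b) = 0 := by
          rw [map_sub, hab, sub_self]
        have := hinj _ h1
        exact sub_eq_zero.mp this
      · exact hsurjA
    rw [spectrum.notMem_iff]
    have halg : algebraMap ℂ (X →L[ℂ] X) z - T = -(A - μ • (1:X→L[ℂ]X)) := by
      rw [Algebra.algebraMap_eq_smul_one, hA, hμ]
      ext x
      simp only [ContinuousLinearMap.sub_apply, ContinuousLinearMap.smul_apply,
        ContinuousLinearMap.one_apply, ContinuousLinearMap.neg_apply, sub_smul]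
      abel
    rw [halg]
    apply IsUnit.neg
    have hker0 : LinearMap.ker ((A - μ • (1:X→L[ℂ]X) : X →L[ℂ] X) : X →ₗ[ℂ] X) = ⊥ := by
      rw [Submodule.eq_bot_iff]
      intro x hx
      exact hinj x hx
    set E2 := ContinuousLinearEquiv.ofBijective (A - μ • (1:X→L[ℂ]X))
      hker0 (LinearMap.range_eq_top.mpr hbij.2) with hE2
    refine ⟨E2.toUnit, ?_⟩
    rfl
  intro hacc
  obtain ⟨y, hy, hyne⟩ := accPt_iff_nhds.mp hacc (Metric.ball l δ)
    (Metric.ball_mem_nhds _ hδpos)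
  exact hnotspec y hyne (by simpa [Metric.mem_ball] using hy.1) hy.2

end Main
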